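/- arXiv:1202.3181 — 2 statements merged into one kernel-verified Lean document; each statement's English description precedes it below -/
import Mathlib

section
/- For real numbers A, B and η > 0, the integral over α ∈ ℝ of 1/(|α + A + iη| · |α + B + iη|) is bounded by C/|A - B + iη| · (1 + log₊|( A - B)/η|), where log₊ x = max{0, log x} for x > 0, log₊ 0 = 0, and C is a universal constant. -/
open MeasureTheory

noncomputable def logPlus (x : ℝ) : ℝ := max 0 (Real.log x)

open Real Set


lemma logPlus_nonneg (x : ℝ) : 0 ≤ logPlus x := le_max_left _ _

lemma logPlus_mono {x y : ℝ} (hx : 0 ≤ x) (hxy : x ≤ y) : logPlus x ≤ logPlus y := by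
  unfold logPlus
  rcases le_or_gt x 1 with h | h
  · have : Real.log x ≤ 0 := by
      rcases eq_or_lt_of_le hx with h0 | h0
      · simp [← h0]
      · exact Real.log_nonpos hx h
    simp only [max_le_iff]
    exact ⟨le_max_left _ _, this.trans (le_max_left _ _)⟩
  · exact max_le_max le_rfl (Real.log_le_log (by linarith) hxy)

lemma arsinh_le_log3_add (y : ℝ) (hy : 0 ≤ y) :
    Real.arsinh y ≤ Real.log 3 + logPlus y := by
  have h1 : Real.sqrt (1 + y ^ 2) ≤ 1 + y := by
    rw [show (1:ℝ) + y = Real.sqrt ((1+y)^2) by rw [Real.sqrt_sq (by linarith)]]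
    exact Real.sqrt_le_sqrt (by nlinarith)
  have h2 : Real.arsinh y ≤ Real.log (1 + 2 * y) := by
    rw [Real.arsinh]
    exact Real.log_le_log (by nlinarith [Real.sqrt_pos.mpr (show (0:ℝ) < 1 + y^2 by positivity)]) (by linarith)
  rcases le_or_gt y 1 with h | h
  · refine h2.trans ?_
    have : Real.log (1 + 2*y) ≤ Real.log 3 := Real.log_le_log (by linarith) (by linarith)
    linarith [logPlus_nonneg y]
  · refine h2.trans ?_
    have h3 : Real.log (1 + 2*y) ≤ Real.log (3 * y) := Real.log_le_log (by linarith) (by linarith)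
    rw [Real.log_mul (by norm_num) (by linarith)] at h3
    have : Real.log y ≤ logPlus y := le_max_right _ _
    linarith

lemma sqrt_add_sq_pos {x η : ℝ} (hη : 0 < η) : 0 < Real.sqrt (x ^ 2 + η ^ 2) :=
  Real.sqrt_pos.mpr (by positivity)

lemma q_integrable {η : ℝ} (hη : 0 < η) :
    Integrable (fun x : ℝ => (x ^ 2 + η ^ 2)⁻¹) := by
  have h1 : Integrable (fun x : ℝ => (1 + (η⁻¹ * x) ^ 2)⁻¹) :=
    integrable_inv_one_add_sq.comp_mul_left' (inv_ne_zero hη.ne')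
  refine (h1.const_mul (η ^ 2)⁻¹).congr (Filter.Eventually.of_forall fun x => ?_)
  field_simp
  ring

lemma g_cont {η c : ℝ} (hη : 0 < η) :
    Continuous (fun x : ℝ => min (c / Real.sqrt (x ^ 2 + η ^ 2)) ((x ^ 2 + η ^ 2)⁻¹)) := by
  apply Continuous.min
  · exact continuous_const.div (by fun_prop) (fun x => (sqrt_add_sq_pos hη).ne')
  · exact Continuous.inv₀ (by fun_prop) (fun x => by positivity)

lemma g_nonneg {η c : ℝ} (hη : 0 < η) (hc : 0 ≤ c) (x : ℝ) :
    0 ≤ min (c / Real.sqrt (x ^ 2 + η ^ 2)) ((x ^ 2 + η ^ 2)⁻¹) := by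
  have := sqrt_add_sq_pos (x := x) hη
  apply le_min <;> positivity

lemma g_integrable {η c : ℝ} (hη : 0 < η) (hc : 0 ≤ c) :
    Integrable (fun x : ℝ => min (c / Real.sqrt (x ^ 2 + η ^ 2)) ((x ^ 2 + η ^ 2)⁻¹)) := by
  refine (q_integrable hη).mono' (g_cont hη).aestronglyMeasurable
    (Filter.Eventually.of_forall fun x => ?_)
  rw [Real.norm_eq_abs, abs_of_nonneg (g_nonneg hη hc x)]
  exact min_le_right _ _

lemma phi_hasDeriv {η c : ℝ} (hη : 0 < η) (x : ℝ) :
    HasDerivAt (fun y : ℝ => c * Real.arsinh (y / η))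
      (c / Real.sqrt (x ^ 2 + η ^ 2)) x := by
  have h1 : HasDerivAt (fun y : ℝ => y / η) (1 / η) x := by
    simpa using (hasDerivAt_id x).div_const η
  have h2 := ((Real.hasDerivAt_arsinh (x / η)).comp x h1).const_mul c
  refine h2.congr_deriv ?_
  have hs : Real.sqrt (x ^ 2 + η ^ 2) = η * Real.sqrt (1 + (x / η) ^ 2) := by
    rw [show x ^ 2 + η ^ 2 = η ^ 2 * (1 + (x / η) ^ 2) by field_simp; ring,
      Real.sqrt_mul (sq_nonneg η), Real.sqrt_sq hη.le]
  have hspos : 0 < Real.sqrt (1 + (x / η) ^ 2) := Real.sqrt_pos.mpr (by positivity)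
  rw [hs]
  field_simp

lemma tail_aux {η c L : ℝ} (hη : 0 < η) (hL : 0 < L)
    (hg : IntegrableOn (fun x : ℝ => min (c / Real.sqrt (x ^ 2 + η ^ 2)) ((x ^ 2 + η ^ 2)⁻¹)) (Ioi L)) :
    (∫ x in Ioi L, min (c / Real.sqrt (x ^ 2 + η ^ 2)) ((x ^ 2 + η ^ 2)⁻¹)) ≤ L⁻¹ := by
  have hmaj : IntegrableOn (fun x : ℝ => x ^ (-2 : ℝ)) (Ioi L) :=
    integrableOn_Ioi_rpow_of_lt (by norm_num) hL
  have hmono : ∀ x ∈ Ioi L,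
      min (c / Real.sqrt (x ^ 2 + η ^ 2)) ((x ^ 2 + η ^ 2)⁻¹) ≤ x ^ (-2 : ℝ) := by
    intro x hx
    have hx0 : 0 < x := hL.trans hx
    have h2 : x ^ (-2 : ℝ) = (x ^ 2)⁻¹ := by
      rw [Real.rpow_neg hx0.le, show ((2:ℝ)) = ((2:ℕ):ℝ) by norm_num, Real.rpow_natCast]
    rw [h2]
    exact (min_le_right _ _).trans (by
      apply inv_anti₀ (by positivity) (by nlinarith))
  refine (setIntegral_mono_on hg hmaj measurableSet_Ioi hmono).trans ?_
  rw [integral_Ioi_rpow_of_lt (by norm_num) hL,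
    show (-2 : ℝ) + 1 = -1 by norm_num, Real.rpow_neg_one]
  field_simp
  exact le_rfl

lemma centered_bound {η c : ℝ} (hη : 0 < η) (hc : 0 < c) :
    (∫ x : ℝ, min (c / Real.sqrt (x ^ 2 + η ^ 2)) ((x ^ 2 + η ^ 2)⁻¹))
      ≤ 2 * c * Real.arsinh (1 / (c * η)) + 2 * c := by
  set g : ℝ → ℝ := fun x => min (c / Real.sqrt (x ^ 2 + η ^ 2)) ((x ^ 2 + η ^ 2)⁻¹) with hgdef
  set L : ℝ := c⁻¹ with hLdef
  have hL : 0 < L := by positivity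
  have hgint : Integrable g := g_integrable hη hc.le
  rw [← integral_add_compl (measurableSet_Icc : MeasurableSet (Icc (-L) L)) hgint]
  have hmid : (∫ x in Icc (-L) L, g x) ≤ 2 * c * Real.arsinh (1 / (c * η)) := by
    have hphiInt : IntegrableOn (fun x : ℝ => c / Real.sqrt (x ^ 2 + η ^ 2)) (Icc (-L) L) :=
      (continuous_const.div (by fun_prop) (fun x => (sqrt_add_sq_pos hη).ne')).integrableOn_Icc
    have h1 : (∫ x in Icc (-L) L, g x) ≤ ∫ x in Icc (-L) L, c / Real.sqrt (x ^ 2 + η ^ 2) :=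
      setIntegral_mono_on hgint.integrableOn hphiInt measurableSet_Icc
        (fun x _ => min_le_left _ _)
    refine h1.trans ?_
    rw [integral_Icc_eq_integral_Ioc,
      ← intervalIntegral.integral_of_le (by linarith : -L ≤ L)]
    rw [intervalIntegral.integral_eq_sub_of_hasDerivAt
      (fun x _ => phi_hasDeriv hη x)
      ((continuous_const.div (by fun_prop) (fun x => (sqrt_add_sq_pos hη).ne')).intervalIntegrable _ _)]
    rw [show -L / η = -(L / η) by ring, Real.arsinh_neg]
    rw [show L / η = 1 / (c * η) by rw [hLdef]; field_simp]
    ring_nf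
    exact le_rfl
  have htail : (∫ x in (Icc (-L) L)ᶜ, g x) ≤ 2 * c := by
    have hcompl : (Icc (-L) L)ᶜ = Iio (-L) ∪ Ioi L := by
      ext x
      simp only [mem_compl_iff, mem_Icc, mem_union, mem_Iio, mem_Ioi, not_and, not_le]
      constructor
      · intro h
        rcases lt_or_ge x (-L) with h' | h'
        · exact Or.inl h'
        · exact Or.inr (h h')
      · rintro (h | h) h'
        · linarith
        · exact h
    rw [hcompl]
    have hdisj : Disjoint (Iio (-L)) (Ioi L) := by
      rw [Set.disjoint_left]
      intro x hx hx'
      simp only [mem_Iio, mem_Ioi] at hx hx'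
      linarith
    rw [setIntegral_union hdisj measurableSet_Ioi hgint.integrableOn hgint.integrableOn]
    have hright : (∫ x in Ioi L, g x) ≤ c := by
      have := tail_aux hη hL hgint.integrableOn
      rwa [hLdef, inv_inv] at this
    have hleft : (∫ x in Iio (-L), g x) ≤ c := by
      have heq : (∫ x in Iio (-L), g x) = ∫ x in Ioi L, g x := by
        rw [setIntegral_congr_set Iio_ae_eq_Iic]
        rw [← integral_comp_neg_Ioi]
        congr 1
        funext x
        simp only [hgdef, neg_sq]
      rw [heq]; exact hright
    linarith
  linarith

set_option maxHeartbeats 1000000 in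
theorem stmt_0 : ∃ C : ℝ, 0 < C ∧ ∀ (A B η : ℝ), 0 < η →
    (∫ α : ℝ, 1 / (‖(α : ℂ) + (A : ℂ) + (η : ℂ) * Complex.I‖ *
        ‖(α : ℂ) + (B : ℂ) + (η : ℂ) * Complex.I‖)) ≤
      C / ‖(A : ℂ) - (B : ℂ) + (η : ℂ) * Complex.I‖ *
        (1 + logPlus |(A - B) / η|) := by
  refine ⟨100, by norm_num, fun A B η hη => ?_⟩
  have hs2 : (0:ℝ) < Real.sqrt 2 := Real.sqrt_pos.mpr (by norm_num)
  have hs2sq : Real.sqrt 2 ^ 2 = 2 := Real.sq_sqrt (by norm_num)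
  have hs2le : Real.sqrt 2 ≤ 1.5 := by
    rw [show (1.5:ℝ) = Real.sqrt (1.5^2) from (Real.sqrt_sq (by norm_num)).symm]
    exact Real.sqrt_le_sqrt (by norm_num)
  have hs2ge : (1:ℝ) ≤ Real.sqrt 2 := by
    rw [show (1:ℝ) = Real.sqrt 1 from Real.sqrt_one.symm]
    exact Real.sqrt_le_sqrt (by norm_num)
  set M : ℝ := Real.sqrt ((A - B) ^ 2 + η ^ 2) with hMdef
  have hM0 : 0 < M := sqrt_add_sq_pos hη
  have hMabs : ‖(A:ℂ) - (B:ℂ) + (η:ℂ) * Complex.I‖ = M := by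
    rw [show ((A:ℂ) - (B:ℂ) + (η:ℂ) * Complex.I)
        = (((A - B : ℝ)):ℂ) + ((η:ℝ):ℂ) * Complex.I by push_cast; ring,
      Complex.norm_add_mul_I]
  set K : ℝ := M / (2 * Real.sqrt 2) with hKdef
  have hK0 : 0 < K := by positivity
  set c : ℝ := K⁻¹ with hcdef
  have hc0 : 0 < c := by positivity
  set gA : ℝ → ℝ := fun α =>
    min (c / Real.sqrt ((α + A) ^ 2 + η ^ 2)) (((α + A) ^ 2 + η ^ 2)⁻¹) with hgAdef
  set gB : ℝ → ℝ := fun α =>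
    min (c / Real.sqrt ((α + B) ^ 2 + η ^ 2)) (((α + B) ^ 2 + η ^ 2)⁻¹) with hgBdef
  have hgA : Integrable gA := (g_integrable (c := c) hη hc0.le).comp_add_right A
  have hgB : Integrable gB := (g_integrable (c := c) hη hc0.le).comp_add_right B
  have habsA : ∀ x : ℝ, ‖(x:ℂ) + (A:ℂ) + (η:ℂ) * Complex.I‖
      = Real.sqrt ((x + A) ^ 2 + η ^ 2) := by
    intro x
    rw [show ((x:ℂ) + (A:ℂ) + (η:ℂ) * Complex.I)
        = (((x + A : ℝ)):ℂ) + ((η:ℝ):ℂ) * Complex.I by push_cast; ring,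
      Complex.norm_add_mul_I]
  have habsB : ∀ x : ℝ, ‖(x:ℂ) + (B:ℂ) + (η:ℂ) * Complex.I‖
      = Real.sqrt ((x + B) ^ 2 + η ^ 2) := by
    intro x
    rw [show ((x:ℂ) + (B:ℂ) + (η:ℂ) * Complex.I)
        = (((x + B : ℝ)):ℂ) + ((η:ℝ):ℂ) * Complex.I by push_cast; ring,
      Complex.norm_add_mul_I]
  -- pointwise bound
  have key : ∀ α : ℝ, 1 / (Real.sqrt ((α + A) ^ 2 + η ^ 2) * Real.sqrt ((α + B) ^ 2 + η ^ 2))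
      ≤ gA α + gB α := by
    intro α
    set a : ℝ := Real.sqrt ((α + A) ^ 2 + η ^ 2) with hadef
    set b : ℝ := Real.sqrt ((α + B) ^ 2 + η ^ 2) with hbdef
    have ha0 : 0 < a := sqrt_add_sq_pos hη
    have hb0 : 0 < b := sqrt_add_sq_pos hη
    have haη : η ≤ a := by
      calc η = Real.sqrt (η ^ 2) := (Real.sqrt_sq hη.le).symm
        _ ≤ a := Real.sqrt_le_sqrt (by nlinarith [sq_nonneg (α + A)])
    have hbη : η ≤ b := by
      calc η = Real.sqrt (η ^ 2) := (Real.sqrt_sq hη.le).symm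
        _ ≤ b := Real.sqrt_le_sqrt (by nlinarith [sq_nonneg (α + B)])
    have haabs : |α + A| ≤ a := by
      rw [hadef, ← Real.sqrt_sq_eq_abs]
      exact Real.sqrt_le_sqrt (by nlinarith)
    have hbabs : |α + B| ≤ b := by
      rw [hbdef, ← Real.sqrt_sq_eq_abs]
      exact Real.sqrt_le_sqrt (by nlinarith)
    have hab : |A - B| ≤ a + b := by
      calc |A - B| = |(α + A) - (α + B)| := by ring_nf
        _ ≤ |α + A| + |α + B| := abs_sub _ _
        _ ≤ a + b := add_le_add haabs hbabs
    have hAB2 : (A - B) ^ 2 ≤ (a + b) ^ 2 := by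
      calc (A - B) ^ 2 = |A - B| ^ 2 := (sq_abs _).symm
        _ ≤ (a + b) ^ 2 := pow_le_pow_left₀ (abs_nonneg _) hab 2
    have hasq : a * a = (α + A) ^ 2 + η ^ 2 := Real.mul_self_sqrt (by positivity)
    have hbsq : b * b = (α + B) ^ 2 + η ^ 2 := Real.mul_self_sqrt (by positivity)
    have hMsq : M ^ 2 = (A - B) ^ 2 + η ^ 2 := Real.sq_sqrt (by positivity)
    rcases le_total a b with hcase | hcase
    · -- a ≤ b, so b is large
      have hab2 : (a + b) ^ 2 ≤ 4 * b ^ 2 := by nlinarith [mul_nonneg (sub_nonneg.mpr hcase) (by positivity : (0:ℝ) ≤ 3 * b + a)]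
      have hη2 : η ^ 2 ≤ b ^ 2 := by nlinarith [mul_self_le_mul_self hη.le hbη]
      have h8 : M ^ 2 ≤ 8 * b ^ 2 := by
        have hb2 : 0 ≤ b ^ 2 := sq_nonneg b
        linarith [hMsq, hAB2]
      have hX2 : (2 * Real.sqrt 2 * b) ^ 2 = 8 * b ^ 2 := by
        have h' : (2 * Real.sqrt 2 * b) ^ 2 = 4 * (Real.sqrt 2 ^ 2) * b ^ 2 := by ring
        rw [h', hs2sq]; ring
      have hMb : M ≤ 2 * Real.sqrt 2 * b := by
        calc M = Real.sqrt (M ^ 2) := (Real.sqrt_sq hM0.le).symm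
          _ ≤ Real.sqrt ((2 * Real.sqrt 2 * b) ^ 2) := Real.sqrt_le_sqrt (by rw [hX2]; exact h8)
          _ = 2 * Real.sqrt 2 * b := Real.sqrt_sq (by positivity)
      have hKb : K ≤ b := by
        rw [hKdef, div_le_iff₀ (by positivity)]
        linarith
      have h1 : 1 / (a * b) ≤ c / a := by
        rw [hcdef, ← one_div, div_div]
        apply one_div_le_one_div_of_le (by positivity)
        rw [mul_comm a b]
        exact mul_le_mul_of_nonneg_right hKb ha0.le
      have h2 : 1 / (a * b) ≤ ((α + A) ^ 2 + η ^ 2)⁻¹ := by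
        rw [← hasq, one_div]
        exact inv_anti₀ (by positivity) (mul_le_mul_of_nonneg_left hcase ha0.le)
      have h3 : 1 / (a * b) ≤ gA α := le_min h1 h2
      have h4 : 0 ≤ gB α := g_nonneg hη hc0.le (α + B)
      linarith
    · -- b ≤ a
      have hab2 : (a + b) ^ 2 ≤ 4 * a ^ 2 := by nlinarith [mul_nonneg (sub_nonneg.mpr hcase) (by positivity : (0:ℝ) ≤ 3 * a + b)]
      have hη2 : η ^ 2 ≤ a ^ 2 := by nlinarith [mul_self_le_mul_self hη.le haη]
      have h8 : M ^ 2 ≤ 8 * a ^ 2 := by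
        have ha2 : 0 ≤ a ^ 2 := sq_nonneg a
        linarith [hMsq, hAB2]
      have hX2 : (2 * Real.sqrt 2 * a) ^ 2 = 8 * a ^ 2 := by
        have h' : (2 * Real.sqrt 2 * a) ^ 2 = 4 * (Real.sqrt 2 ^ 2) * a ^ 2 := by ring
        rw [h', hs2sq]; ring
      have hMb : M ≤ 2 * Real.sqrt 2 * a := by
        calc M = Real.sqrt (M ^ 2) := (Real.sqrt_sq hM0.le).symm
          _ ≤ Real.sqrt ((2 * Real.sqrt 2 * a) ^ 2) := Real.sqrt_le_sqrt (by rw [hX2]; exact h8)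
          _ = 2 * Real.sqrt 2 * a := Real.sqrt_sq (by positivity)
      have hKb : K ≤ a := by
        rw [hKdef, div_le_iff₀ (by positivity)]
        linarith
      have h1 : 1 / (a * b) ≤ c / b := by
        rw [hcdef, ← one_div, div_div]
        apply one_div_le_one_div_of_le (by positivity)
        exact mul_le_mul_of_nonneg_right hKb hb0.le
      have h2 : 1 / (a * b) ≤ ((α + B) ^ 2 + η ^ 2)⁻¹ := by
        rw [← hbsq, one_div]
        refine inv_anti₀ (by positivity) ?_
        exact mul_le_mul_of_nonneg_right hcase hb0.le
      have h3 : 1 / (a * b) ≤ gB α := le_min h1 h2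
      have h4 : 0 ≤ gA α := g_nonneg hη hc0.le (α + A)
      linarith
  -- integral bound
  have step1 : (∫ α : ℝ, 1 / (‖(α : ℂ) + (A : ℂ) + (η : ℂ) * Complex.I‖ *
        ‖(α : ℂ) + (B : ℂ) + (η : ℂ) * Complex.I‖))
      ≤ ∫ α : ℝ, (gA α + gB α) := by
    apply integral_mono_of_nonneg
    · exact Filter.Eventually.of_forall fun α => by positivity
    · exact hgA.add hgB
    · refine Filter.Eventually.of_forall fun α => ?_
      simp only [habsA, habsB]
      exact key α
  have step2 : (∫ α : ℝ, (gA α + gB α)) =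
      2 * ∫ x : ℝ, min (c / Real.sqrt (x ^ 2 + η ^ 2)) ((x ^ 2 + η ^ 2)⁻¹) := by
    rw [integral_add hgA hgB]
    have e1 : (∫ α : ℝ, gA α) = ∫ x : ℝ, min (c / Real.sqrt (x ^ 2 + η ^ 2)) ((x ^ 2 + η ^ 2)⁻¹) :=
      integral_add_right_eq_self
        (fun x : ℝ => min (c / Real.sqrt (x ^ 2 + η ^ 2)) ((x ^ 2 + η ^ 2)⁻¹)) A
    have e2 : (∫ α : ℝ, gB α) = ∫ x : ℝ, min (c / Real.sqrt (x ^ 2 + η ^ 2)) ((x ^ 2 + η ^ 2)⁻¹) :=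
      integral_add_right_eq_self
        (fun x : ℝ => min (c / Real.sqrt (x ^ 2 + η ^ 2)) ((x ^ 2 + η ^ 2)⁻¹)) B
    rw [e1, e2]
    ring
  have step3 : (2:ℝ) * (∫ x : ℝ, min (c / Real.sqrt (x ^ 2 + η ^ 2)) ((x ^ 2 + η ^ 2)⁻¹))
      ≤ 2 * (2 * c * Real.arsinh (1 / (c * η)) + 2 * c) := by
    have := centered_bound hη hc0
    linarith
  -- arsinh and logPlus estimates
  set t : ℝ := |(A - B) / η| with htdef
  have ht : t = |A - B| / η := by rw [htdef, abs_div, abs_of_pos hη]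
  have ht0 : 0 ≤ t := abs_nonneg _
  have hP0 : 0 ≤ logPlus t := logPlus_nonneg t
  have hKη : 1 / (c * η) = K / η := by
    rw [hcdef]
    field_simp
  have hMle : M ≤ |A - B| + η := by
    rw [hMdef, show |A - B| + η = Real.sqrt ((|A - B| + η) ^ 2) from
      (Real.sqrt_sq (by positivity)).symm]
    exact Real.sqrt_le_sqrt (by nlinarith [sq_abs (A - B), abs_nonneg (A - B)])
  have hKη2 : K / η ≤ max t 1 := by
    have h1 : K ≤ M / 2 := by
      rw [hKdef]
      apply div_le_div_of_nonneg_left hM0.le (by norm_num)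
      nlinarith
    have h2 : K / η ≤ (t + 1) / 2 := by
      rw [ht, div_le_div_iff₀ hη (by norm_num)]
      have : K * 2 ≤ M := by linarith
      calc K * 2 ≤ M := this
        _ ≤ |A - B| + η := hMle
        _ = (|A - B| / η + 1) * η := by field_simp
    refine h2.trans ?_
    rcases le_total t 1 with h | h
    · calc (t + 1) / 2 ≤ 1 := by linarith
        _ ≤ max t 1 := le_max_right _ _
    · calc (t + 1) / 2 ≤ t := by linarith
        _ ≤ max t 1 := le_max_left _ _
  have harsinh : Real.arsinh (1 / (c * η)) ≤ Real.log 3 + logPlus t := by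
    rw [hKη]
    refine (arsinh_le_log3_add _ (by positivity)).trans ?_
    have h1 : logPlus (K / η) ≤ logPlus (max t 1) := logPlus_mono (by positivity) hKη2
    have h2 : logPlus (max t 1) ≤ logPlus t := by
      rcases le_total t 1 with h | h
      · rw [max_eq_right h]
        have : logPlus 1 = 0 := by simp [logPlus]
        rw [this]
        exact hP0
      · rw [max_eq_left h]
    linarith
  have hl3a : Real.log 3 ≤ 2 := by
    rw [show (2:ℝ) = Real.log (Real.exp 2) from (Real.log_exp 2).symm]
    apply Real.log_le_log (by norm_num)
    linarith [Real.add_one_le_exp (2:ℝ)]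
  have hl3b : 0 ≤ Real.log 3 := Real.log_nonneg (by norm_num)
  have hcval : c = 2 * Real.sqrt 2 / M := by
    rw [hcdef, hKdef, inv_div]
  have step4 : 2 * (2 * c * Real.arsinh (1 / (c * η)) + 2 * c)
      ≤ 100 / M * (1 + logPlus t) := by
    have h1 : 2 * (2 * c * Real.arsinh (1 / (c * η)) + 2 * c)
        ≤ 2 * (2 * c * (Real.log 3 + logPlus t) + 2 * c) := by
      have := mul_le_mul_of_nonneg_left harsinh (by positivity : (0:ℝ) ≤ 2 * c)
      linarith
    refine h1.trans ?_
    have heq : 2 * (2 * c * (Real.log 3 + logPlus t) + 2 * c)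
        = 8 * Real.sqrt 2 * (1 + Real.log 3 + logPlus t) / M := by
      rw [hcval]
      field_simp
      ring
    rw [heq]
    have hnum : 8 * Real.sqrt 2 * (1 + Real.log 3 + logPlus t) ≤ 100 * (1 + logPlus t) := by
      nlinarith
    calc 8 * Real.sqrt 2 * (1 + Real.log 3 + logPlus t) / M
        ≤ 100 * (1 + logPlus t) / M := by gcongr
      _ = 100 / M * (1 + logPlus t) := by ring
  rw [hMabs]
  calc (∫ α : ℝ, 1 / (‖(α : ℂ) + (A : ℂ) + (η : ℂ) * Complex.I‖ *
        ‖(α : ℂ) + (B : ℂ) + (η : ℂ) * Complex.I‖))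
      ≤ ∫ α : ℝ, (gA α + gB α) := step1
    _ = 2 * ∫ x : ℝ, min (c / Real.sqrt (x ^ 2 + η ^ 2)) ((x ^ 2 + η ^ 2)⁻¹) := step2
    _ ≤ 2 * (2 * c * Real.arsinh (1 / (c * η)) + 2 * c) := step3
    _ ≤ 100 / M * (1 + logPlus t) := step4
end

section
/- Let d > m ≥ 2 and λ as before (λ = d - m if m < d ≤ 2m, λ = m if d > 2m). For any δ ∈ (0, 1), ε ∈ (0,1), α ≥ 0, η ≥ η₀ > 0: ∫_{ℝ^d} ε^m ⟨ξ⟩^{-2d} |ε^m α + |ξ|^m + iε^m η|^{-2} dξ ≤ C ε^{λ(1-δ)} max{α^{λ(1-δ)/m}, 1}, with C depending only on d, m, δ, η₀. -/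
open MeasureTheory Real Set Metric
open scoped ENNReal NNReal

lemma aux_ball_lintegral (d : ℕ) (hd : 0 < d) {s : ℝ} (hs0 : 0 < s) (hsd : s < d) :
    ∫⁻ x : EuclideanSpace ℝ (Fin d) in Metric.ball 0 1,
      ENNReal.ofReal (‖x‖ ^ (-s)) < ∞ := by
  set X := EuclideanSpace ℝ (Fin d)
  set μ := volume.restrict (Metric.ball (0:X) 1) with hμ
  have h_meas : Measurable fun x : X => ‖x‖ ^ (-s) := by fun_prop
  have key := lintegral_eq_lintegral_meas_le μ
    (Filter.Eventually.of_forall fun x => rpow_nonneg (norm_nonneg x) _) h_meas.aemeasurable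
  rw [key]
  have hsub : ∀ t : ℝ, 0 < t → {a : X | t ≤ ‖a‖ ^ (-s)} ⊆
      Metric.closedBall 0 (t ^ (-s)⁻¹) := by
    intro t ht a ha
    simp only [Set.mem_setOf_eq] at ha
    have hna : (0:ℝ) < ‖a‖ := by
      by_contra h
      push_neg at h
      have h0 : ‖a‖ = 0 := le_antisymm h (norm_nonneg a)
      rw [h0, Real.zero_rpow (by linarith : -s ≠ 0)] at ha
      linarith
    rw [Metric.mem_closedBall, dist_zero_right]
    exact (Real.le_rpow_inv_iff_of_neg hna ht (by linarith : -s < 0)).mpr ha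
  calc ∫⁻ t in Ioi (0:ℝ), μ {a : X | t ≤ ‖a‖ ^ (-s)}
      ≤ ∫⁻ t in Ioc (0:ℝ) 1 ∪ Ioi 1, μ {a : X | t ≤ ‖a‖ ^ (-s)} :=
        lintegral_mono_set Ioi_subset_Ioc_union_Ioi
    _ ≤ (∫⁻ t in Ioc (0:ℝ) 1, μ {a : X | t ≤ ‖a‖ ^ (-s)})
        + ∫⁻ t in Ioi (1:ℝ), μ {a : X | t ≤ ‖a‖ ^ (-s)} := lintegral_union_le _ _ _
    _ < ∞ := by
        refine ENNReal.add_lt_top.2 ⟨?_, ?_⟩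
        · calc ∫⁻ t in Ioc (0:ℝ) 1, μ {a : X | t ≤ ‖a‖ ^ (-s)}
              ≤ ∫⁻ _ in Ioc (0:ℝ) 1, volume (Metric.ball (0:X) 1) := by
                apply setLIntegral_mono' measurableSet_Ioc
                intro t _
                calc μ {a : X | t ≤ ‖a‖ ^ (-s)} ≤ μ Set.univ := measure_mono (Set.subset_univ _)
                  _ = volume (Metric.ball (0:X) 1) := by
                      rw [hμ, Measure.restrict_apply_univ]
            _ = volume (Metric.ball (0:X) 1) * volume (Ioc (0:ℝ) 1) := by
                rw [setLIntegral_const]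
            _ < ∞ := by
                apply ENNReal.mul_lt_top measure_ball_lt_top
                simp [Real.volume_Ioc]
        · have hc : (-s)⁻¹ * d < -1 := by
            have h1 : (1:ℝ) < (d:ℝ)/s := (one_lt_div hs0).mpr hsd
            have h2 : (-s)⁻¹ * d = -((d:ℝ)/s) := by
              rw [← neg_inv, div_eq_inv_mul]; ring
            rw [h2]; linarith
          have hint : IntegrableOn (fun t : ℝ => t ^ ((-s)⁻¹ * d)) (Ioi 1) :=
            integrableOn_Ioi_rpow_of_lt hc one_pos
          have hfin := hint.setLIntegral_lt_top
          calc ∫⁻ t in Ioi (1:ℝ), μ {a : X | t ≤ ‖a‖ ^ (-s)}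
              ≤ ∫⁻ t in Ioi (1:ℝ), ENNReal.ofReal (t ^ ((-s)⁻¹ * d)) *
                  volume (Metric.closedBall (0:X) 1) := by
                apply setLIntegral_mono' measurableSet_Ioi
                intro t ht
                have ht0 : (0:ℝ) < t := lt_trans one_pos ht
                calc μ {a : X | t ≤ ‖a‖ ^ (-s)}
                    ≤ volume {a : X | t ≤ ‖a‖ ^ (-s)} := Measure.restrict_le_self _
                  _ ≤ volume (Metric.closedBall (0:X) (t ^ (-s)⁻¹)) :=
                      measure_mono (hsub t ht0)
                  _ = ENNReal.ofReal ((t ^ (-s)⁻¹) ^ (Module.finrank ℝ X)) *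
                      volume (Metric.closedBall (0:X) 1) :=
                      Measure.addHaar_closedBall' _ _ (rpow_nonneg ht0.le _)
                  _ = ENNReal.ofReal (t ^ ((-s)⁻¹ * d)) *
                      volume (Metric.closedBall (0:X) 1) := by
                      have hfr : Module.finrank ℝ X = d := finrank_euclideanSpace_fin
                      rw [hfr, ← Real.rpow_natCast (t ^ (-s)⁻¹) d, ← Real.rpow_mul ht0.le]
            _ = (∫⁻ t in Ioi (1:ℝ), ENNReal.ofReal (t ^ ((-s)⁻¹ * d))) *
                  volume (Metric.closedBall (0:X) 1) := by
                rw [lintegral_mul_const' _ _ measure_closedBall_lt_top.ne]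
            _ < ∞ := ENNReal.mul_lt_top hfin measure_closedBall_lt_top

lemma aux_majorant_integrable (d : ℕ) (hd : 0 < d) {s : ℝ} (hs0 : 0 < s) (hsd : s < d) :
    Integrable (fun x : EuclideanSpace ℝ (Fin d) =>
      ((1 + ‖x‖ ^ 2) ^ d)⁻¹ * ‖x‖ ^ (-s)) := by
  set X := EuclideanSpace ℝ (Fin d)
  set G : X → ℝ := fun x => ((1 + ‖x‖ ^ 2) ^ d)⁻¹ * ‖x‖ ^ (-s) with hG
  have hGmeas : Measurable G := by
    apply Measurable.mul
    · fun_prop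
    · fun_prop
  have hGnn : ∀ x, 0 ≤ G x := by
    intro x
    apply mul_nonneg (inv_nonneg.2 (pow_nonneg (by positivity) _)) (rpow_nonneg (norm_nonneg x) _)
  rw [← integrableOn_univ, ← Set.union_compl_self (Metric.ball (0:X) 1)]
  apply MeasureTheory.IntegrableOn.union
  · -- on the ball: G ≤ ‖x‖ ^ (-s)
    refine ⟨hGmeas.aestronglyMeasurable.restrict, ?_⟩
    rw [hasFiniteIntegral_iff_ofReal (Filter.Eventually.of_forall fun x => hGnn x)]
    calc ∫⁻ x : X in Metric.ball 0 1, ENNReal.ofReal (G x)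
        ≤ ∫⁻ x : X in Metric.ball 0 1, ENNReal.ofReal (‖x‖ ^ (-s)) := by
          apply lintegral_mono
          intro x
          apply ENNReal.ofReal_le_ofReal
          rw [hG]
          calc ((1 + ‖x‖ ^ 2) ^ d)⁻¹ * ‖x‖ ^ (-s) ≤ 1 * ‖x‖ ^ (-s) := by
                apply mul_le_mul_of_nonneg_right _ (rpow_nonneg (norm_nonneg x) _)
                apply inv_le_one_of_one_le₀
                apply one_le_pow₀
                nlinarith [sq_nonneg ‖x‖]
            _ = ‖x‖ ^ (-s) := one_mul _
      _ < ∞ := aux_ball_lintegral d hd hs0 hsd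
  · -- off the ball: G ≤ (1 + ‖x‖²) ^ (-(2d)/2)
    have hint : Integrable (fun x : X => ((1:ℝ) + ‖x‖ ^ 2) ^ (-(2*(d:ℝ)) / 2)) := by
      apply integrable_rpow_neg_one_add_norm_sq
      rw [finrank_euclideanSpace_fin]
      have : (0:ℝ) < d := by exact_mod_cast hd
      nlinarith
    apply (hint.integrableOn).mono' hGmeas.aestronglyMeasurable.restrict
    apply (ae_restrict_iff' measurableSet_ball.compl).2
    apply Filter.Eventually.of_forall
    intro x hx
    have hx1 : (1:ℝ) ≤ ‖x‖ := by
      simpa [Metric.mem_ball, dist_zero_right] using hx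
    rw [Real.norm_of_nonneg (hGnn x), hG]
    have h1 : ‖x‖ ^ (-s) ≤ 1 :=
      Real.rpow_le_one_of_one_le_of_nonpos hx1 (by linarith)
    have h2 : ((1 + ‖x‖ ^ 2) ^ d : ℝ)⁻¹ = ((1:ℝ) + ‖x‖ ^ 2) ^ (-(2*(d:ℝ)) / 2) := by
      have hpos : (0:ℝ) < 1 + ‖x‖ ^ 2 := by positivity
      rw [show -(2*(d:ℝ))/2 = -(d:ℝ) by ring, Real.rpow_neg hpos.le,
        Real.rpow_natCast]
    calc ((1 + ‖x‖ ^ 2) ^ d : ℝ)⁻¹ * ‖x‖ ^ (-s) ≤ ((1 + ‖x‖ ^ 2) ^ d : ℝ)⁻¹ * 1 := by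
          apply mul_le_mul_of_nonneg_left h1 (inv_nonneg.2 (by positivity))
      _ = ((1:ℝ) + ‖x‖ ^ 2) ^ (-(2*(d:ℝ)) / 2) := by rw [mul_one, h2]

set_option maxHeartbeats 1000000 in
open MeasureTheory in
theorem stmt_4 (d m : ℕ) (hm : 2 ≤ m) (hdm : m < d) (δ η₀ : ℝ)
    (hδ : δ ∈ Set.Ioo (0 : ℝ) 1) (hη₀ : 0 < η₀) :
    ∃ C : ℝ, 0 < C ∧ ∀ (ε α η : ℝ), ε ∈ Set.Ioo (0 : ℝ) 1 → 0 ≤ α → η₀ ≤ η →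
      (∫ ξ : EuclideanSpace ℝ (Fin d),
          ε ^ m / ((1 + ‖ξ‖ ^ 2) ^ d *
            ‖((ε ^ m * α : ℝ) + (‖ξ‖ ^ m : ℝ) + (ε ^ m * η : ℝ) * Complex.I : ℂ)‖ ^ 2)) ≤
        C * ε ^ (((if d ≤ 2 * m then d - m else m : ℕ) : ℝ) * (1 - δ)) *
          max (α ^ (((if d ≤ 2 * m then d - m else m : ℕ) : ℝ) * (1 - δ) / m)) 1 := by
  obtain ⟨hδ0, hδ1⟩ := hδ
  set X := EuclideanSpace ℝ (Fin d)
  set L : ℕ := if d ≤ 2 * m then d - m else m with hLdef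
  have hd : 0 < d := by omega
  have hL1 : 1 ≤ L := by rw [hLdef]; split <;> omega
  have hLm : L ≤ m := by rw [hLdef]; split <;> omega
  have hmLd : m + L ≤ d := by rw [hLdef]; split <;> omega
  set q : ℝ := (L : ℝ) * (1 - δ) with hqdef
  have hq0 : 0 < q := by
    apply mul_pos _ (by linarith)
    exact_mod_cast hL1
  have hqL : q < L := by
    have hLpos : (0:ℝ) < L := by exact_mod_cast hL1
    nlinarith
  have hm0 : (0:ℝ) < m := by exact_mod_cast (by omega : 0 < m)
  set p : ℝ := q / m with hpdef
  have hp0 : 0 < p := div_pos hq0 hm0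
  have hp1 : p < 1 := by
    rw [hpdef, div_lt_one hm0]
    have : (L:ℝ) ≤ m := by exact_mod_cast hLm
    linarith
  have hmp : (m:ℝ) * p = q := by
    rw [hpdef]; field_simp
  set s : ℝ := m * (1 + p) with hsdef
  have hs0 : 0 < s := by positivity
  have hsd : s < d := by
    have h1 : s = (m:ℝ) + q := by rw [hsdef, ← hmp]; ring
    have h2 : (m:ℝ) + (L:ℝ) ≤ d := by exact_mod_cast hmLd
    linarith [hqL]
  set G : X → ℝ := fun x => ((1 + ‖x‖ ^ 2) ^ d)⁻¹ * ‖x‖ ^ (-s) with hGdef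
  have hG : Integrable G := aux_majorant_integrable d hd hs0 hsd
  have hGnn : 0 ≤ ∫ x, G x := by
    apply integral_nonneg
    intro x
    exact mul_nonneg (inv_nonneg.2 (by positivity)) (Real.rpow_nonneg (norm_nonneg x) _)
  refine ⟨η₀ ^ (p - 1) * ((∫ x, G x) + 1), ?_, ?_⟩
  · exact mul_pos (Real.rpow_pos_of_pos hη₀ _) (by linarith)
  intro ε α η hε hα hη
  obtain ⟨hε0, hε1⟩ := hε
  have hεm : (0:ℝ) < ε ^ m := by positivity
  have hB : (0:ℝ) < ε ^ m * η₀ := by positivity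
  set z : X → ℂ := fun ξ =>
    ((ε ^ m * α : ℝ) : ℂ) + ((‖ξ‖ ^ m : ℝ) : ℂ) + ((ε ^ m * η : ℝ) : ℂ) * Complex.I with hzdef
  have habs1 : ∀ ξ : X, ‖ξ‖ ^ m ≤ ‖z ξ‖ := by
    intro ξ
    have hre : (z ξ).re = ε ^ m * α + ‖ξ‖ ^ m := by
      simp [hzdef, ← Complex.ofReal_pow]
    calc ‖ξ‖ ^ m ≤ ε ^ m * α + ‖ξ‖ ^ m := by nlinarith
      _ = (z ξ).re := hre.symm
      _ ≤ ‖z ξ‖ := Complex.re_le_norm _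
  have habs2 : ∀ ξ : X, ε ^ m * η₀ ≤ ‖z ξ‖ := by
    intro ξ
    have him : (z ξ).im = ε ^ m * η := by
      simp [hzdef, ← Complex.ofReal_pow]
    calc ε ^ m * η₀ ≤ ε ^ m * η := by nlinarith
      _ = (z ξ).im := him.symm
      _ ≤ ‖z ξ‖ := Complex.im_le_norm _
  have hzpos : ∀ ξ : X, 0 < ‖z ξ‖ := fun ξ => lt_of_lt_of_le hB (habs2 ξ)
  set f : X → ℝ := fun ξ => ε ^ m / ((1 + ‖ξ‖ ^ 2) ^ d * ‖z ξ‖ ^ 2) with hfdef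
  have hTpos : ∀ ξ : X, (0:ℝ) < (1 + ‖ξ‖ ^ 2) ^ d := fun ξ => by positivity
  have hfnn : ∀ ξ, 0 ≤ f ξ := by
    intro ξ
    apply div_nonneg hεm.le
    exact mul_nonneg (hTpos ξ).le (by positivity)
  -- integrability of f
  have hf_int : Integrable f := by
    have hint : Integrable (fun x : X => ((1:ℝ) + ‖x‖ ^ 2) ^ (-(2*(d:ℝ)) / 2)) := by
      apply integrable_rpow_neg_one_add_norm_sq
      rw [finrank_euclideanSpace_fin]
      have : (0:ℝ) < d := by exact_mod_cast hd
      nlinarith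
    have hcont : Continuous f := by
      apply Continuous.div continuous_const
      · apply Continuous.mul (by fun_prop)
        apply Continuous.pow
        exact continuous_norm.comp (by fun_prop)
      · intro x
        exact (mul_pos (hTpos x) (pow_pos (hzpos x) 2)).ne'
    apply (hint.const_mul (ε ^ m / (ε ^ m * η₀) ^ 2)).mono' hcont.aestronglyMeasurable
    apply Filter.Eventually.of_forall
    intro x
    rw [Real.norm_of_nonneg (hfnn x)]
    have h2 : ((1:ℝ) + ‖x‖ ^ 2) ^ (-(2*(d:ℝ)) / 2) = ((1 + ‖x‖ ^ 2) ^ d : ℝ)⁻¹ := by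
      have hpos : (0:ℝ) < 1 + ‖x‖ ^ 2 := by positivity
      rw [show -(2*(d:ℝ))/2 = -(d:ℝ) by ring, Real.rpow_neg hpos.le, Real.rpow_natCast]
    have hstep : f x ≤ ε ^ m / ((1 + ‖x‖ ^ 2) ^ d * (ε ^ m * η₀) ^ 2) := by
      simp only [hfdef]
      apply div_le_div_of_nonneg_left hεm.le (mul_pos (hTpos x) (pow_pos hB 2))
      apply mul_le_mul_of_nonneg_left _ (hTpos x).le
      exact pow_le_pow_left₀ hB.le (habs2 x) 2
    calc f x ≤ ε ^ m / ((1 + ‖x‖ ^ 2) ^ d * (ε ^ m * η₀) ^ 2) := hstep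
      _ = ε ^ m / (ε ^ m * η₀) ^ 2 * ((1:ℝ) + ‖x‖ ^ 2) ^ (-(2*(d:ℝ)) / 2) := by
          rw [h2]
          field_simp
  -- a.e. pointwise bound
  have hae : ∀ᵐ ξ : X ∂volume, f ξ ≤ ε ^ q * η₀ ^ (p - 1) * G ξ := by
    haveI : Nonempty (Fin d) := ⟨⟨0, hd⟩⟩
    haveI : Nontrivial X := inferInstance
    have h0 : ∀ᵐ ξ : X ∂volume, ξ ≠ (0:X) := by
      rw [MeasureTheory.ae_iff]
      simpa using measure_singleton (0:X)
    filter_upwards [h0] with ξ hξ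
    have hn : (0:ℝ) < ‖ξ‖ := norm_pos_iff.mpr hξ
    have hr := hzpos ξ
    set r := ‖z ξ‖ with hrdef
    -- interpolation bound on r^2
    have hsplit : r ^ 2 = r ^ ((1:ℝ) + p) * r ^ ((1:ℝ) - p) := by
      rw [← Real.rpow_add hr, ← Real.rpow_natCast r 2]
      norm_num
    have hb1 : ‖ξ‖ ^ s ≤ r ^ ((1:ℝ) + p) := by
      have : (‖ξ‖ : ℝ) ^ s = (‖ξ‖ ^ m) ^ ((1:ℝ) + p) := by
        rw [hsdef, Real.rpow_mul (norm_nonneg ξ), Real.rpow_natCast]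
      rw [this]
      exact Real.rpow_le_rpow (by positivity) (habs1 ξ) (by linarith)
    have hb2 : (ε ^ m * η₀) ^ ((1:ℝ) - p) ≤ r ^ ((1:ℝ) - p) :=
      Real.rpow_le_rpow hB.le (habs2 ξ) (by linarith)
    have hden : (1 + ‖ξ‖ ^ 2) ^ d * (‖ξ‖ ^ s * (ε ^ m * η₀) ^ ((1:ℝ) - p))
        ≤ (1 + ‖ξ‖ ^ 2) ^ d * r ^ 2 := by
      rw [hsplit]
      apply mul_le_mul_of_nonneg_left _ (hTpos ξ).le
      exact mul_le_mul hb1 hb2 (by positivity) (by positivity)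
    have hdpos : (0:ℝ) < (1 + ‖ξ‖ ^ 2) ^ d * (‖ξ‖ ^ s * (ε ^ m * η₀) ^ ((1:ℝ) - p)) := by
      apply mul_pos (hTpos ξ)
      exact mul_pos (Real.rpow_pos_of_pos hn _) (Real.rpow_pos_of_pos hB _)
    have hstep : f ξ ≤ ε ^ m /
        ((1 + ‖ξ‖ ^ 2) ^ d * (‖ξ‖ ^ s * (ε ^ m * η₀) ^ ((1:ℝ) - p))) := by
      simp only [hfdef]
      exact div_le_div_of_nonneg_left hεm.le hdpos hden
    refine hstep.trans (le_of_eq ?_)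
    -- algebraic identity
    simp only [hGdef]
    have e1 : ((ε:ℝ) ^ m * η₀) ^ ((1:ℝ) - p) = ε ^ ((m:ℝ) * (1 - p)) * η₀ ^ ((1:ℝ) - p) := by
      rw [Real.mul_rpow hεm.le hη₀.le, ← Real.rpow_natCast ε m, ← Real.rpow_mul hε0.le]
    have e2 : (ε:ℝ) ^ m = ε ^ q * ε ^ ((m:ℝ) * (1 - p)) := by
      rw [← Real.rpow_add hε0, ← Real.rpow_natCast ε m]
      congr 1
      rw [← hmp]; ring
    have e3 : η₀ ^ (p - 1) = (η₀ ^ ((1:ℝ) - p))⁻¹ := by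
      rw [← Real.rpow_neg hη₀.le]
      norm_num
    have e4 : (‖ξ‖ : ℝ) ^ (-s) = (‖ξ‖ ^ s)⁻¹ := Real.rpow_neg (norm_nonneg ξ) s
    rw [e1, e2, e3, e4]
    have h5 : ((1:ℝ) + ‖ξ‖ ^ 2) ^ d ≠ 0 := (hTpos ξ).ne'
    have h6 : (‖ξ‖ : ℝ) ^ s ≠ 0 := (Real.rpow_pos_of_pos hn s).ne'
    have h7 : (ε:ℝ) ^ ((m:ℝ) * (1 - p)) ≠ 0 := (Real.rpow_pos_of_pos hε0 _).ne'
    have h8 : η₀ ^ ((1:ℝ) - p) ≠ 0 := (Real.rpow_pos_of_pos hη₀ _).ne'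
    field_simp
  have hmono := integral_mono_ae hf_int ((hG.const_mul (ε ^ q * η₀ ^ (p - 1)))) hae
  rw [integral_const_mul] at hmono
  have hεq : (0:ℝ) < ε ^ q := Real.rpow_pos_of_pos hε0 _
  calc (∫ ξ : X, f ξ) ≤ ε ^ q * η₀ ^ (p - 1) * ∫ x, G x := hmono
    _ ≤ η₀ ^ (p - 1) * ((∫ x, G x) + 1) * ε ^ q * 1 := by
        rw [mul_one]
        have h := Real.rpow_pos_of_pos hη₀ (p - 1)
        nlinarith
    _ ≤ η₀ ^ (p - 1) * ((∫ x, G x) + 1) * ε ^ q *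
          max (α ^ (q / m)) 1 := by
        apply mul_le_mul_of_nonneg_left (le_max_right _ _)
        positivity
end
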